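/- (Lemma 3.2, success branch / correctness of Algorithm 3's dual output, stated for an arbitrary preconditioner-response sequence.) Let B ∈ ℝ^{n×m} with m ≥ 1, let w : {1,…,m} → ℝ with w(e) > 0 for all e, W = diag(w), d ∈ ℝ^n, g > 0, ε > 0, α > 0, and set β := ε/(2α²). Let T ≥ 1 be an integer with T ≥ 4·ε^{−2}·α²·ln(2m), and let φ_1, …, φ_T ∈ ℝ^n be any sequence. For t = 1, …, T, let Φ_t := ∑_{s<t} φ_s (so Φ_1 = 0), let q_t ∈ ℝ^{2m} be the vector whose first m coordinates are W^{−1} B^T Φ_t and whose last m coordinates are −W^{−1} B^T Φ_t, and define p_t ∈ ℝ^m by p_t(e) := (exp(β·q_t(e)) − exp(β·q_t(e+m)))/∑_{j=1}^{2m} exp(β·q_t(j)). Assume that for every t: ‖W^{−1} B^T φ_t‖∞ ≤ α and ⟨d − B(g·W^{−1} p_t), φ_t⟩ ≥ ε·g. Then the average φ_* := (1/T)·∑_{t=1}^T φ_t satisfies ‖W^{−1} B^T φ_*‖∞ ≤ (1/g)·⟨d, φ_*⟩. -/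

import Mathlib

/-- Two-point Hoeffding, normalized. -/
lemma two_point_core (a b : ℝ) (ha : 0 ≤ a) (hb : 0 ≤ b) (hab : a + b = 1) (x : ℝ) :
    a * Real.exp x + b * Real.exp (-x) ≤ Real.exp ((a - b) * x + x ^ 2 / 2) := by
  set D : ℝ → ℝ := fun z => a * Real.exp z + b * Real.exp (-z) with hDdef
  set N : ℝ → ℝ := fun z => a * Real.exp z - b * Real.exp (-z) with hNdef
  have hD : ∀ z, 0 < D z := by
    intro z
    rcases lt_or_ge 0 a with ha' | ha'
    · have := mul_pos ha' (Real.exp_pos z)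
      have h2 : 0 ≤ b * Real.exp (-z) := mul_nonneg hb (Real.exp_pos _).le
      simp only [hDdef]; linarith
    · have haz : a = 0 := le_antisymm ha' ha
      have hb1 : b = 1 := by linarith
      simp [hDdef, haz, hb1, Real.exp_pos]
  have hexpneg : ∀ z : ℝ, HasDerivAt (fun u : ℝ => Real.exp (-u)) (-Real.exp (-z)) z := by
    intro z
    have h1 := (Real.hasDerivAt_exp (-z)).comp z (hasDerivAt_neg z)
    simp at h1; exact h1
  have hDN : ∀ z, HasDerivAt D (N z) z := by
    intro z
    have h1 := ((Real.hasDerivAt_exp z).const_mul a).add ((hexpneg z).const_mul b)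
    simp [hDdef, hNdef, mul_comm, sub_eq_add_neg, mul_neg] at h1 ⊢; exact h1
  have hND : ∀ z, HasDerivAt N (D z) z := by
    intro z
    have h1 := ((Real.hasDerivAt_exp z).const_mul a).sub ((hexpneg z).const_mul b)
    simp [hDdef, hNdef, mul_comm, sub_eq_add_neg, mul_neg] at h1 ⊢; exact h1
  have hsq : ∀ z, D z ^ 2 - N z ^ 2 = 4 * a * b := by
    intro z
    have h1 : Real.exp z * Real.exp (-z) = 1 := by
      rw [← Real.exp_add]; simp
    simp only [hDdef, hNdef]
    nlinarith [h1]
  -- φfun monotone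
  set φf : ℝ → ℝ := fun z => z - N z / D z with hφfdef
  have hφderiv : ∀ z, HasDerivAt φf ((N z / D z) ^ 2) z := by
    intro z
    have h1 := (hasDerivAt_id z).sub (((hND z).div (hDN z)) (hD z).ne')
    refine h1.congr_deriv (Eq.symm ?_)
    have hDz := (hD z).ne'
    field_simp
    ring
  have hφmono : Monotone φf := by
    have hdiff : Differentiable ℝ φf := fun z => (hφderiv z).differentiableAt
    apply monotone_of_deriv_nonneg hdiff
    intro z
    rw [(hφderiv z).deriv]
    positivity
  -- g function
  set G : ℝ → ℝ := fun z => (a - b) * z + z ^ 2 / 2 - Real.log (D z) with hGdef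
  have hG0 : G 0 = 0 := by
    simp [hGdef, hDdef, hab]
  have hφ0 : φf 0 = -(a - b) := by
    simp [hφfdef, hNdef, hDdef, hab]
  have hGderiv : ∀ z, HasDerivAt G (φf z - φf 0) z := by
    intro z
    have hz2 : HasDerivAt (fun u : ℝ => u ^ 2 / 2) z z := by
      have := (hasDerivAt_pow 2 z).div_const 2
      simpa using this
    have hlin : HasDerivAt (fun u : ℝ => (a - b) * u) (a - b) z := by
      simpa using (hasDerivAt_id z).const_mul (a - b)
    have hlog : HasDerivAt (fun u => Real.log (D u)) (N z / D z) z :=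
      (hDN z).log (hD z).ne'
    have h1 := (hlin.add hz2).sub hlog
    refine h1.congr_deriv (Eq.symm ?_)
    rw [hφ0]
    simp [hφfdef]
    ring
  have hGdiff : Differentiable ℝ G := fun z => (hGderiv z).differentiableAt
  have hGnonneg : ∀ z, 0 ≤ G z := by
    intro z
    rcases le_total 0 z with hz | hz
    · have hmono : MonotoneOn G (Set.Ici 0) := by
        apply monotoneOn_of_deriv_nonneg (convex_Ici 0) hGdiff.continuous.continuousOn
          hGdiff.differentiableOn
        intro u hu
        rw [(hGderiv u).deriv]
        have : (0:ℝ) ≤ u := le_of_lt (by simpa using hu)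
        have := hφmono this
        linarith
      have := hmono (Set.self_mem_Ici) (Set.mem_Ici.mpr hz) hz
      linarith [hG0 ▸ this]
    · have hmono : AntitoneOn G (Set.Iic 0) := by
        apply antitoneOn_of_deriv_nonpos (convex_Iic 0) hGdiff.continuous.continuousOn
          hGdiff.differentiableOn
        intro u hu
        rw [(hGderiv u).deriv]
        have : u ≤ (0:ℝ) := le_of_lt (by simpa using hu)
        have := hφmono this
        linarith
      have := hmono (Set.mem_Iic.mpr hz) (Set.self_mem_Iic) hz
      linarith [hG0 ▸ this]
  have hx := hGnonneg x
  have hlogle : Real.log (D x) ≤ (a - b) * x + x ^ 2 / 2 := by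
    simp only [hGdef] at hx; linarith
  calc a * Real.exp x + b * Real.exp (-x) = D x := rfl
    _ = Real.exp (Real.log (D x)) := (Real.exp_log (hD x)).symm
    _ ≤ Real.exp ((a - b) * x + x ^ 2 / 2) := Real.exp_le_exp.mpr hlogle


lemma two_point (a b x : ℝ) (ha : 0 ≤ a) (hb : 0 ≤ b) (hs : 0 < a + b) :
    a * Real.exp x + b * Real.exp (-x) ≤
      (a + b) * Real.exp ((a - b) / (a + b) * x + x ^ 2 / 2) := by
  have hsne : a + b ≠ 0 := hs.ne'
  have h := two_point_core (a / (a + b)) (b / (a + b)) (by positivity) (by positivity)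
    (by field_simp) x
  have h2 := mul_le_mul_of_nonneg_left h hs.le
  calc a * Real.exp x + b * Real.exp (-x)
      = (a + b) * (a / (a + b) * Real.exp x + b / (a + b) * Real.exp (-x)) := by
        field_simp
    _ ≤ (a + b) * Real.exp ((a / (a + b) - b / (a + b)) * x + x ^ 2 / 2) := h2
    _ = (a + b) * Real.exp ((a - b) / (a + b) * x + x ^ 2 / 2) := by
        rw [div_sub_div_same]

lemma chord (x c : ℝ) (hc : 0 < c) (hx : |x| ≤ c) :
    Real.exp x ≤ (c - x) / (2 * c) * Real.exp (-c) + (c + x) / (2 * c) * Real.exp c := by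
  rw [abs_le] at hx
  have h1 : (0:ℝ) ≤ (c - x) / (2 * c) := by
    apply div_nonneg (by linarith) (by linarith)
  have h2 : (0:ℝ) ≤ (c + x) / (2 * c) := by
    apply div_nonneg (by linarith) (by linarith)
  have h3 : (c - x) / (2 * c) + (c + x) / (2 * c) = 1 := by
    field_simp
    ring
  have h4 := convexOn_exp.2 (Set.mem_univ (-c)) (Set.mem_univ c) h1 h2 h3
  simp only [smul_eq_mul] at h4
  have h5 : (c - x) / (2 * c) * (-c) + (c + x) / (2 * c) * c = x := by
    field_simp
    ring
  rw [h5] at h4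
  exact h4


theorem boosting_success_branch (n m : ℕ) (hm : 1 ≤ m)
    (B : Matrix (Fin n) (Fin m) ℝ) (w : Fin m → ℝ) (hw : ∀ e, 0 < w e)
    (d : Fin n → ℝ) (g ε α : ℝ) (hg : 0 < g) (hε : 0 < ε) (hα : 0 < α)
    (β : ℝ) (hβ : β = ε / (2 * α ^ 2))
    (T : ℕ) (hT1 : 1 ≤ T)
    (hT : 4 * ε⁻¹ ^ 2 * α ^ 2 * Real.log (2 * m) ≤ (T : ℝ))
    (φ : Fin T → Fin n → ℝ)
    (Φ : Fin T → Fin n → ℝ)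
    (hΦ : ∀ t, Φ t = ∑ s ∈ Finset.univ.filter (fun s => s < t), φ s)
    (q : Fin T → Fin (m + m) → ℝ)
    (hq : ∀ t (e : Fin m),
      q t (Fin.castAdd m e) = B.transpose.mulVec (Φ t) e / w e ∧
      q t (Fin.natAdd m e) = -(B.transpose.mulVec (Φ t) e / w e))
    (p : Fin T → Fin m → ℝ)
    (hp : ∀ t (e : Fin m), p t e =
      (Real.exp (β * q t (Fin.castAdd m e)) - Real.exp (β * q t (Fin.natAdd m e)))
        / ∑ j, Real.exp (β * q t j))
    (hwidth : ∀ t, ‖(fun e => B.transpose.mulVec (φ t) e / w e)‖ ≤ α)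
    (hsuccess : ∀ t,
      ε * g ≤ ∑ v, (d - B.mulVec (fun e => g * p t e / w e)) v * φ t v)
    (φstar : Fin n → ℝ) (hφstar : φstar = (T : ℝ)⁻¹ • ∑ t, φ t) :
    ‖(fun e => B.transpose.mulVec φstar e / w e)‖ ≤
      (1 / g) * ∑ v, d v * φstar v := by
  have hw' : ∀ e, w e ≠ 0 := fun e => (hw e).ne'
  have hβpos : 0 < β := by rw [hβ]; positivity
  have hmR : (0:ℝ) < m := by exact_mod_cast hm
  haveI : Nonempty (Fin m) := ⟨⟨0, hm⟩⟩
  set y : Fin T → Fin m → ℝ := fun t e => B.transpose.mulVec (φ t) e / w e with hydef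
  have hyle : ∀ t e, |y t e| ≤ α := by
    intro t e
    have h2 := norm_le_pi_norm (fun e => B.transpose.mulVec (φ t) e / w e) e
    have h3 := le_trans h2 (hwidth t)
    simp only [Real.norm_eq_abs] at h3
    exact h3
  set S : ℕ → Fin m → ℝ :=
    fun k e => ∑ t ∈ Finset.univ.filter (fun t : Fin T => (t : ℕ) < k), y t e with hSdef
  set Z : ℕ → ℝ :=
    fun k => ∑ e, (Real.exp (β * S k e) + Real.exp (-(β * S k e))) with hZdef
  have hmul_sum : ∀ (F : Finset (Fin T)) (e : Fin m),
      B.transpose.mulVec (∑ s ∈ F, φ s) e = ∑ s ∈ F, B.transpose.mulVec (φ s) e := by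
    intro F e
    simp only [Matrix.mulVec, dotProduct, Finset.sum_apply, Finset.mul_sum]
    exact Finset.sum_comm
  have hYS : ∀ (t : Fin T) (e : Fin m),
      B.transpose.mulVec (Φ t) e / w e = S (t : ℕ) e := by
    intro t e
    rw [hΦ t, hmul_sum, Finset.sum_div]
    apply Finset.sum_congr
    · apply Finset.filter_congr
      intro s _
      exact Fin.lt_def
    · intro s _
      rfl
  have hZpos : ∀ k, 0 < Z k := by
    intro k
    apply Finset.sum_pos (fun e _ => by positivity) Finset.univ_nonempty
  have hZq : ∀ t : Fin T, ∑ j, Real.exp (β * q t j) = Z (t : ℕ) := by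
    intro t
    rw [Fin.sum_univ_add (f := fun j => Real.exp (β * q t j))]
    simp only [hZdef]
    rw [Finset.sum_add_distrib]
    congr 1
    · exact Finset.sum_congr rfl (fun e _ => by rw [(hq t e).1, hYS t e])
    · exact Finset.sum_congr rfl (fun e _ => by rw [(hq t e).2, hYS t e, mul_neg])
  have hpy : ∀ (t : Fin T) (e : Fin m),
      p t e = (Real.exp (β * S (t:ℕ) e) - Real.exp (-(β * S (t:ℕ) e))) / Z (t:ℕ) := by
    intro t e
    rw [hp t e, hZq t, (hq t e).1, (hq t e).2, hYS t e, mul_neg]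
  set μ : Fin T → ℝ := fun t => ∑ e, p t e * y t e with hμdef
  have hfilter : ∀ (k : ℕ) (hk : k < T), Finset.univ.filter (fun t : Fin T => (t:ℕ) < k + 1)
      = insert ⟨k, hk⟩ (Finset.univ.filter (fun t : Fin T => (t:ℕ) < k)) := by
    intro k hk
    ext s
    simp only [Finset.mem_filter, Finset.mem_insert, Finset.mem_univ, true_and, Fin.ext_iff]
    omega
  have hSstep : ∀ (k : ℕ) (hk : k < T) (e : Fin m), S (k+1) e = S k e + y ⟨k, hk⟩ e := by
    intro k hk e
    simp only [hSdef]
    rw [hfilter k hk, Finset.sum_insert (by simp)]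
    ring
  have hstep : ∀ (k : ℕ) (hk : k < T),
      Z (k+1) ≤ Z k * Real.exp (β * μ ⟨k, hk⟩ + β ^ 2 * α ^ 2 / 2) := by
    intro k hk
    set t : Fin T := ⟨k, hk⟩ with htdef
    have hc : 0 < β * α := by positivity
    have hxle : ∀ e, |β * y t e| ≤ β * α := by
      intro e
      rw [abs_mul, abs_of_pos hβpos]
      exact mul_le_mul_of_nonneg_left (hyle t e) hβpos.le
    have hterm : ∀ e : Fin m, Real.exp (β * S (k+1) e) + Real.exp (-(β * S (k+1) e)) ≤
        ((Real.exp (β * S k e) * (β * α - β * y t e)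
          + Real.exp (-(β * S k e)) * (β * α + β * y t e)) / (2 * (β * α))) * Real.exp (-(β * α))
        + ((Real.exp (β * S k e) * (β * α + β * y t e)
          + Real.exp (-(β * S k e)) * (β * α - β * y t e)) / (2 * (β * α))) * Real.exp (β * α) := by
      intro e
      have h1 := chord (β * y t e) (β * α) hc (hxle e)
      have h2 := chord (-(β * y t e)) (β * α) hc (by rw [abs_neg]; exact hxle e)
      have e1 : Real.exp (β * S (k+1) e) = Real.exp (β * S k e) * Real.exp (β * y t e) := by
        rw [hSstep k hk e, mul_add, Real.exp_add]
      have e2 : Real.exp (-(β * S (k+1) e))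
          = Real.exp (-(β * S k e)) * Real.exp (-(β * y t e)) := by
        rw [hSstep k hk e, mul_add, neg_add, Real.exp_add]
      rw [e1, e2]
      have b1 := mul_le_mul_of_nonneg_left h1 (Real.exp_pos (β * S k e)).le
      have b2 := mul_le_mul_of_nonneg_left h2 (Real.exp_pos (-(β * S k e))).le
      calc Real.exp (β * S k e) * Real.exp (β * y t e)
            + Real.exp (-(β * S k e)) * Real.exp (-(β * y t e)) ≤ _ := add_le_add b1 b2
        _ = _ := by ring
    set V : ℝ := ∑ e, (Real.exp (β * S k e) - Real.exp (-(β * S k e))) * y t e with hVdef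
    set b' : ℝ := ∑ e, (Real.exp (β * S k e) * (β * α - β * y t e)
          + Real.exp (-(β * S k e)) * (β * α + β * y t e)) / (2 * (β * α)) with hb'def
    set a' : ℝ := ∑ e, (Real.exp (β * S k e) * (β * α + β * y t e)
          + Real.exp (-(β * S k e)) * (β * α - β * y t e)) / (2 * (β * α)) with ha'def
    have hcoef : ∀ e, 0 ≤ β * α - β * y t e ∧ 0 ≤ β * α + β * y t e := by
      intro e
      have := abs_le.mp (hxle e)
      constructor <;> linarith [this.1, this.2]
    have hb'nn : 0 ≤ b' := Finset.sum_nonneg fun e _ => by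
      have h := hcoef e
      have h1 := (Real.exp_pos (β * S k e)).le
      have h2 := (Real.exp_pos (-(β * S k e))).le
      apply div_nonneg _ (by positivity)
      exact add_nonneg (mul_nonneg h1 h.1) (mul_nonneg h2 h.2)
    have ha'nn : 0 ≤ a' := Finset.sum_nonneg fun e _ => by
      have h := hcoef e
      have h1 := (Real.exp_pos (β * S k e)).le
      have h2 := (Real.exp_pos (-(β * S k e))).le
      apply div_nonneg _ (by positivity)
      exact add_nonneg (mul_nonneg h1 h.2) (mul_nonneg h2 h.1)
    have hsum : Z (k+1) ≤ b' * Real.exp (-(β * α)) + a' * Real.exp (β * α) := by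
      rw [hb'def, ha'def, Finset.sum_mul, Finset.sum_mul, ← Finset.sum_add_distrib]
      exact Finset.sum_le_sum (fun e _ => hterm e)
    have hab : a' + b' = Z k := by
      rw [ha'def, hb'def, ← Finset.sum_add_distrib]
      apply Finset.sum_congr rfl
      intro e _
      have hcne : (2 * (β * α)) ≠ 0 := by positivity
      field_simp
      ring
    have hdiff : a' - b' = β * V / (β * α) := by
      rw [ha'def, hb'def, hVdef, Finset.mul_sum, Finset.sum_div, ← Finset.sum_sub_distrib]
      apply Finset.sum_congr rfl
      intro e _
      have hcne : (2 * (β * α)) ≠ 0 := by positivity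
      field_simp
      ring
    have hμV : μ t = V / Z k := by
      simp only [hμdef, hVdef]
      rw [Finset.sum_div]
      apply Finset.sum_congr rfl
      intro e _
      rw [hpy t e]
      ring
    have h2p := two_point a' b' (β * α) ha'nn hb'nn (by rw [hab]; exact hZpos k)
    calc Z (k+1) ≤ b' * Real.exp (-(β * α)) + a' * Real.exp (β * α) := hsum
      _ ≤ (a' + b') * Real.exp ((a' - b') / (a' + b') * (β * α) + (β * α) ^ 2 / 2) := by
          linarith [h2p]
      _ = Z k * Real.exp (β * μ t + β ^ 2 * α ^ 2 / 2) := by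
          have halg : ∀ Vv Zv : ℝ, Zv ≠ 0 →
              β * Vv / (β * α) / Zv * (β * α) + (β * α) ^ 2 / 2
                = β * (Vv / Zv) + β ^ 2 * α ^ 2 / 2 := by
            intro Vv Zv hZv
            field_simp
          rw [hab, hdiff, hμV, halg V (Z k) (hZpos k).ne']
  have hZbound : ∀ k, k ≤ T → Z k ≤ 2 * m *
      Real.exp (β * (∑ t ∈ Finset.univ.filter (fun t : Fin T => (t:ℕ) < k), μ t)
        + k * (β ^ 2 * α ^ 2 / 2)) := by
    intro k
    induction k with
    | zero =>
      intro _
      have hS0 : ∀ e, S 0 e = 0 := by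
        intro e
        simp [hSdef]
      have hZ0 : Z 0 = 2 * m := by
        have h2 : ∀ e : Fin m, Real.exp (β * S 0 e) + Real.exp (-(β * S 0 e)) = 2 := by
          intro e
          rw [hS0 e]
          norm_num
        simp only [hZdef]
        rw [Finset.sum_congr rfl (fun e _ => h2 e), Finset.sum_const, Finset.card_univ,
          Fintype.card_fin]
        push_cast
        ring
      have hf0 : Finset.univ.filter (fun t : Fin T => (t:ℕ) < 0) = ∅ := by
        apply Finset.filter_false_of_mem
        intro t _
        omega
      rw [hZ0, hf0]
      simp
    | succ k ih =>
      intro hk1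
      have hk : k < T := hk1
      have h1 := hstep k hk
      have h2 := ih (le_of_lt hk)
      have hμsum : ∑ t ∈ Finset.univ.filter (fun t : Fin T => (t:ℕ) < k + 1), μ t
          = μ ⟨k, hk⟩ + ∑ t ∈ Finset.univ.filter (fun t : Fin T => (t:ℕ) < k), μ t := by
        rw [hfilter k hk, Finset.sum_insert (by simp)]
      calc Z (k+1) ≤ Z k * Real.exp (β * μ ⟨k, hk⟩ + β ^ 2 * α ^ 2 / 2) := h1
        _ ≤ 2 * m * Real.exp (β * (∑ t ∈ Finset.univ.filter (fun t : Fin T => (t:ℕ) < k), μ t)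
              + k * (β ^ 2 * α ^ 2 / 2)) * Real.exp (β * μ ⟨k, hk⟩ + β ^ 2 * α ^ 2 / 2) := by
            exact mul_le_mul_of_nonneg_right h2 (Real.exp_pos _).le
        _ = _ := by
            rw [mul_assoc, ← Real.exp_add]
            congr 2
            rw [hμsum]
            push_cast
            ring
  have hfinal : ∀ e : Fin m, β * |S T e| ≤
      Real.log (2 * m) + β * (∑ t, μ t) + T * (β ^ 2 * α ^ 2 / 2) := by
    intro e
    have hfilterT : Finset.univ.filter (fun t : Fin T => (t:ℕ) < T) = Finset.univ := by
      apply Finset.filter_true_of_mem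
      intro t _
      exact t.isLt
    have hZT := hZbound T le_rfl
    rw [hfilterT] at hZT
    have hexple : Real.exp (β * |S T e|) ≤ Z T := by
      have hsingle : ∀ e : Fin m,
          Real.exp (β * S T e) + Real.exp (-(β * S T e)) ≤ Z T := by
        intro e
        exact Finset.single_le_sum
          (f := fun e => Real.exp (β * S T e) + Real.exp (-(β * S T e)))
          (fun e _ => by positivity) (Finset.mem_univ e)
      rcases abs_cases (S T e) with ⟨h1, _⟩ | ⟨h1, _⟩
      · rw [h1]
        have := hsingle e
        linarith [Real.exp_pos (-(β * S T e))]
      · rw [h1, mul_neg]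
        have := hsingle e
        linarith [Real.exp_pos (β * S T e)]
    have h2m : (0:ℝ) < 2 * m := by linarith
    have l1 : β * |S T e| ≤ Real.log (Z T) := by
      rw [← Real.log_exp (β * |S T e|)]
      exact Real.log_le_log (Real.exp_pos _) hexple
    have l2 : Real.log (Z T) ≤ Real.log (2 * m)
        + (β * (∑ t, μ t) + T * (β ^ 2 * α ^ 2 / 2)) := by
      calc Real.log (Z T)
          ≤ Real.log (2 * m * Real.exp (β * (∑ t, μ t) + T * (β ^ 2 * α ^ 2 / 2))) :=
            Real.log_le_log (hZpos T) hZT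
        _ = _ := by
            rw [Real.log_mul h2m.ne' (Real.exp_ne_zero _), Real.log_exp]
    linarith
  have hμd : ∀ t : Fin T, ε * g + g * μ t ≤ ∑ v, d v * φ t v := by
    intro t
    have hBu : ∑ v, (B.mulVec (fun e => g * p t e / w e)) v * φ t v = g * μ t := by
      calc ∑ v, (B.mulVec (fun e => g * p t e / w e)) v * φ t v
          = ∑ v, ∑ e, (B v e * (g * p t e / w e)) * φ t v := by
            apply Finset.sum_congr rfl
            intro v _
            rw [Matrix.mulVec, dotProduct, Finset.sum_mul]
        _ = ∑ e, ∑ v, (B v e * (g * p t e / w e)) * φ t v := Finset.sum_comm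
        _ = ∑ e, (g * p t e / w e) * B.transpose.mulVec (φ t) e := by
            apply Finset.sum_congr rfl
            intro e _
            rw [Matrix.mulVec, dotProduct, Finset.mul_sum]
            apply Finset.sum_congr rfl
            intro v _
            rw [Matrix.transpose_apply]
            ring
        _ = g * μ t := by
            rw [Finset.mul_sum]
            apply Finset.sum_congr rfl
            intro e _
            have hy : y t e = B.transpose.mulVec (φ t) e / w e := rfl
            rw [hy]
            field_simp
    have hs := hsuccess t
    have hsub : ∑ v, (d - B.mulVec (fun e => g * p t e / w e)) v * φ t v
        = ∑ v, d v * φ t v - ∑ v, (B.mulVec (fun e => g * p t e / w e)) v * φ t v := by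
      rw [← Finset.sum_sub_distrib]
      apply Finset.sum_congr rfl
      intro v _
      rw [Pi.sub_apply]
      ring
    rw [hsub, hBu] at hs
    linarith
  have hfilterT : Finset.univ.filter (fun t : Fin T => (t:ℕ) < T) = Finset.univ := by
    apply Finset.filter_true_of_mem
    intro t _
    exact t.isLt
  have hval : ∀ e : Fin m, B.transpose.mulVec φstar e / w e = (T : ℝ)⁻¹ * S T e := by
    intro e
    have hST : S T e = ∑ t, y t e := by
      simp only [hSdef]
      rw [hfilterT]
    rw [hφstar, hST]
    have h1 : B.transpose.mulVec ((T:ℝ)⁻¹ • ∑ t, φ t) e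
        = (T:ℝ)⁻¹ * B.transpose.mulVec (∑ t, φ t) e := by
      rw [Matrix.mulVec_smul]
      rfl
    rw [h1, hmul_sum Finset.univ e, mul_div_assoc, Finset.sum_div]
  have hdstar : ∑ v, d v * φstar v = (T : ℝ)⁻¹ * ∑ t, ∑ v, d v * φ t v := by
    rw [hφstar]
    simp only [Pi.smul_apply, Finset.sum_apply, smul_eq_mul]
    calc ∑ v, d v * ((T:ℝ)⁻¹ * ∑ t, φ t v)
        = ∑ v, ∑ t, (T:ℝ)⁻¹ * (d v * φ t v) := by
          apply Finset.sum_congr rfl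
          intro v _
          rw [Finset.mul_sum, Finset.mul_sum]
          apply Finset.sum_congr rfl
          intro t _
          ring
      _ = ∑ t, ∑ v, (T:ℝ)⁻¹ * (d v * φ t v) := Finset.sum_comm
      _ = (T : ℝ)⁻¹ * ∑ t, ∑ v, d v * φ t v := by
          rw [Finset.mul_sum]
          apply Finset.sum_congr rfl
          intro t _
          rw [Finset.mul_sum]
  -- numeric bound
  have hTpos : (0:ℝ) < T := by exact_mod_cast hT1
  have hL : 0 < Real.log (2 * m) := by
    apply Real.log_pos
    have : (1:ℝ) ≤ m := by exact_mod_cast hm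
    linarith
  have hcoordbound : ∀ e : Fin m, |(T : ℝ)⁻¹ * S T e| ≤
      (1 / g) * ∑ v, d v * φstar v := by
    intro e
    have h1 := hfinal e
    set L := Real.log (2 * (m:ℝ)) with hLdef
    set M := ∑ t, μ t with hMdef
    have hβT : 2 * L / ε ≤ β * T := by
      have hc : (0:ℝ) < ε / (2 * α ^ 2) := by positivity
      have h2 := mul_le_mul_of_nonneg_left hT hc.le
      calc 2 * L / ε = ε / (2 * α ^ 2) * (4 * ε⁻¹ ^ 2 * α ^ 2 * L) := by
            field_simp
            ring
        _ ≤ ε / (2 * α ^ 2) * T := h2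
        _ = β * T := by rw [hβ]
    have hβTpos : 0 < β * (T:ℝ) := by positivity
    have hlogdiv : L / (β * T) ≤ ε / 2 := by
      have h3 : 0 < 2 * L / ε := by positivity
      calc L / (β * T) ≤ L / (2 * L / ε) := by
            apply div_le_div_of_nonneg_left hL.le h3 hβT
        _ = ε / 2 := by
            rw [div_div_eq_mul_div]
            field_simp
    have hquarter : β * α ^ 2 / 2 = ε / 4 := by
      rw [hβ]
      field_simp
      ring
    have hLHS : (T:ℝ)⁻¹ * |S T e| ≤ L / (β * T) + M / T + β * α ^ 2 / 2 := by
      have h3 := mul_le_mul_of_nonneg_left h1 (le_of_lt (inv_pos.mpr hβTpos))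
      have e1 : (β * (T:ℝ))⁻¹ * (β * |S T e|) = (T:ℝ)⁻¹ * |S T e| := by
        field_simp
      have e2 : (β * (T:ℝ))⁻¹ * (L + β * M + T * (β ^ 2 * α ^ 2 / 2))
          = L / (β * T) + M / T + β * α ^ 2 / 2 := by
        field_simp
      rw [e1, e2] at h3
      exact h3
    have hRHS : ε + M / T ≤ (1 / g) * ∑ v, d v * φstar v := by
      rw [hdstar]
      have hsum := Finset.sum_le_sum (fun t (_ : t ∈ Finset.univ) => hμd t)
      have e3 : ∑ _t : Fin T, (ε * g + g * μ _t) = T * (ε * g) + g * M := by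
        rw [Finset.sum_add_distrib, Finset.sum_const, Finset.card_univ, Fintype.card_fin,
          ← Finset.mul_sum]
        simp [nsmul_eq_mul]
        exact Or.inl rfl
      rw [e3] at hsum
      calc ε + M / T = (1 / g) * ((T:ℝ)⁻¹ * ((T:ℝ) * (ε * g) + g * M)) := by
            field_simp
        _ ≤ (1 / g) * ((T:ℝ)⁻¹ * ∑ t, ∑ v, d v * φ t v) := by
            apply mul_le_mul_of_nonneg_left _ (by positivity : (0:ℝ) ≤ 1 / g)
            exact mul_le_mul_of_nonneg_left hsum (by positivity)
    rw [abs_mul, abs_of_pos (inv_pos.mpr hTpos)]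
    have hmid : (T:ℝ)⁻¹ * |S T e| ≤ ε + M / T := by
      linarith [hLHS, hlogdiv, hquarter, hε]
    linarith [hRHS]
  have hC0 : 0 ≤ (1 / g) * ∑ v, d v * φstar v :=
    le_trans (abs_nonneg _) (hcoordbound ⟨0, hm⟩)
  rw [pi_norm_le_iff_of_nonneg hC0]
  intro e
  rw [Real.norm_eq_abs, hval e]
  exact hcoordbound e
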